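/- There exists a constant C > 0 such that for every n ≥ 2 and every simple directed graph G₀ on n vertices, after T = ⌈C·n²·ln n⌉ rounds of the directed two-hop process, with probability at least 1 − 1/n the process has terminated, i.e., for every ordered pair of distinct vertices (u, v) such that G₀ contains a directed path from u to v, the directed edge (u, v) belongs to G_T. -/

import Mathlib

open scoped Classical

noncomputable section

variable {V : Type} [Fintype V] [DecidableEq V]

/-- The out-neighbors of `u` in the directed graph `f`. -/
def outN (f : V → V → Bool) (u : V) : Finset V := Finset.univ.filter (fun v => f u v = true)

/-- The out-degree of `u` in the directed graph `f`. -/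
def outDeg (f : V → V → Bool) (u : V) : ℕ := (outN f u).card

/-- The directed graph obtained from a choice function `c` in one round of the
directed two-hop process: every vertex `u` adds the directed edge to the endpoint
`(c u).2` of its two-hop walk, provided it is not a self-loop; all additions are
simultaneous. -/
def dirNext (f : V → V → Bool) (c : V → V × V) : V → V → Bool :=
  fun a b => f a b || (decide (a ≠ b) && decide ((c a).2 = b))

/-- The probability that in one round of the directed two-hop process on the current
directed graph `f` the vertices make exactly the choices recorded by `c`: each vertex
`u` with at least one out-neighbor independently picks a uniformly random out-neighbor
`v = (c u).1` and, if `v` has at least one out-neighbor, a uniformly random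
out-neighbor `w = (c u).2` of `v`.  Vertices with no out-neighbor get the dummy choice
`(u, u)`, and a dead-end first hop `v` gets the dummy second coordinate `u` (in both
dummy cases no edge is added, as the would-be edge is a self-loop). -/
def dirWeight (f : V → V → Bool) (c : V → V × V) : ℝ :=
  ∏ u : V,
    if outDeg f u = 0 then (if c u = (u, u) then 1 else 0)
    else if (c u).1 ∈ outN f u then
      (if outDeg f (c u).1 = 0 then
        (if (c u).2 = u then (1 : ℝ) / (outDeg f u : ℝ) else 0)
       else if (c u).2 ∈ outN f (c u).1 then
        (1 : ℝ) / ((outDeg f u : ℝ) * (outDeg f (c u).1 : ℝ)) else 0)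
    else 0

/-- Transition probability of one round of the directed two-hop process. -/
def dirStep (f g : V → V → Bool) : ℝ :=
  ∑ c : V → V × V, if dirNext f c = g then dirWeight f c else 0

/-- `reaches f u v` means that the directed graph `f` contains a directed path from
`u` to `v`. -/
def reaches (f : V → V → Bool) (u v : V) : Prop :=
  Relation.ReflTransGen (fun a b => f a b = true) u v

/-- The directed two-hop process started at `f0` has terminated in the state `f` if,
for every ordered pair of distinct vertices `(u, v)` such that `f0` contains a directed
path from `u` to `v`, the directed edge `(u, v)` belongs to `f`. -/
def terminated (f0 f : V → V → Bool) : Prop :=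
  ∀ u v : V, u ≠ v → reaches f0 u v → f u v = true

/-- `trajProb step g0 T E` is the probability, for the Markov chain on a finite state
space `Γ` with one-step transition probabilities `step` started at `g0`, that the
trajectory `(g_0, g_1, …, g_T)` satisfies the event `E`; probabilities are realized as
a probability mass function on finite sequences of states.  (The trajectory is passed
to `E` as a function on `ℕ`, frozen at time `T`.) -/
def trajProb {Γ : Type} [Fintype Γ] (step : Γ → Γ → ℝ) (g0 : Γ) (T : ℕ)
    (E : (ℕ → Γ) → Prop) : ℝ :=
  ∑ s : Fin (T + 1) → Γ,
    if s 0 = g0 ∧ E (fun t => s ⟨min t T, Nat.lt_succ_of_le (Nat.min_le_right t T)⟩)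
    then ∏ t : Fin T, step (s t.castSucc) (s t.succ) else 0

/-- `distAt step g0 t` is the distribution (probability mass function) of the state at
time `t` of the Markov chain with one-step transition probabilities `step` started at
`g0`. -/
def distAt {Γ : Type} [Fintype Γ] (step : Γ → Γ → ℝ) (g0 : Γ) : ℕ → Γ → ℝ
  | 0 => fun g => if g = g0 then 1 else 0
  | (t + 1) => fun g => ∑ h : Γ, distAt step g0 t h * step h g

end

noncomputable section Aux
variable {V : Type} [Fintype V] [DecidableEq V]

/-- Per-coordinate weight of a single vertex's choice. -/
def Wt (f : V → V → Bool) (u : V) (p : V × V) : ℝ :=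
  if outDeg f u = 0 then (if p = (u, u) then 1 else 0)
  else if p.1 ∈ outN f u then
    (if outDeg f p.1 = 0 then
      (if p.2 = u then (1 : ℝ) / (outDeg f u : ℝ) else 0)
     else if p.2 ∈ outN f p.1 then
      (1 : ℝ) / ((outDeg f u : ℝ) * (outDeg f p.1 : ℝ)) else 0)
  else 0

lemma dirWeight_eq_prod (f : V → V → Bool) (c : V → V × V) :
    dirWeight f c = ∏ u : V, Wt f u (c u) := rfl

lemma Wt_nonneg (f : V → V → Bool) (u : V) (p : V × V) : 0 ≤ Wt f u p := by
  unfold Wt; split_ifs <;> positivity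

lemma Wt_sum (f : V → V → Bool) (u : V) : ∑ p : V × V, Wt f u p = 1 := by
  by_cases h : outDeg f u = 0
  · simp only [Wt, if_pos h]
    rw [Finset.sum_ite_eq' Finset.univ ((u, u) : V × V) (fun _ => (1:ℝ))]
    simp
  · rw [Fintype.sum_prod_type]
    simp only [Wt, if_neg h]
    have hdu : ((outDeg f u : ℝ)) ≠ 0 := by
      exact_mod_cast h
    have hinner : ∀ a : V, (∑ b : V, if a ∈ outN f u then
        (if outDeg f a = 0 then (if b = u then (1:ℝ)/(outDeg f u : ℝ) else 0)
         else if b ∈ outN f a then (1:ℝ)/((outDeg f u : ℝ) * (outDeg f a : ℝ)) else 0)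
        else 0) = if a ∈ outN f u then (1:ℝ)/(outDeg f u : ℝ) else 0 := by
      intro a
      by_cases ha : a ∈ outN f u
      · simp only [if_pos ha]
        by_cases hda : outDeg f a = 0
        · simp only [if_pos hda]
          rw [Finset.sum_ite_eq' Finset.univ u (fun _ => (1:ℝ)/(outDeg f u : ℝ))]
          simp
        · simp only [if_neg hda]
          rw [Finset.sum_ite_mem, Finset.univ_inter, Finset.sum_const, nsmul_eq_mul]
          have hda' : ((outDeg f a : ℝ)) ≠ 0 := by exact_mod_cast hda
          have hcard : ((outN f a).card : ℝ) = (outDeg f a : ℝ) := rfl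
          rw [hcard]
          field_simp
      · simp only [if_neg ha, Finset.sum_const_zero]
    rw [Finset.sum_congr rfl (fun a _ => hinner a)]
    rw [Finset.sum_ite_mem, Finset.univ_inter, Finset.sum_const, nsmul_eq_mul]
    have hcard : ((outN f u).card : ℝ) = (outDeg f u : ℝ) := rfl
    rw [hcard]
    field_simp

lemma dirWeight_nonneg (f : V → V → Bool) (c : V → V × V) : 0 ≤ dirWeight f c :=
  Finset.prod_nonneg fun u _ => Wt_nonneg f u (c u)

lemma sum_dirWeight (f : V → V → Bool) : ∑ c : V → V × V, dirWeight f c = 1 := by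
  simp only [dirWeight_eq_prod]
  rw [← Fintype.prod_sum (fun u (p : V × V) => Wt f u p)]
  simp [Wt_sum]

lemma marginal (f : V → V → Bool) (a : V) (p0 : V × V) :
    ∑ c : V → V × V, dirWeight f c * (if c a = p0 then 1 else 0) = Wt f a p0 := by
  have key : ∀ c : V → V × V, dirWeight f c * (if c a = p0 then 1 else 0)
      = ∏ u : V, (if u = a then Wt f u (c u) * (if c u = p0 then 1 else 0) else Wt f u (c u)) := by
    intro c
    rw [dirWeight_eq_prod]
    have h1 : ∏ u : V, (if u = a then Wt f u (c u) * (if c u = p0 then 1 else 0) else Wt f u (c u))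
        = (Wt f a (c a) * (if c a = p0 then 1 else 0)) *
          ∏ u ∈ Finset.univ.erase a, Wt f u (c u) := by
      rw [← Finset.mul_prod_erase Finset.univ
        (fun u => if u = a then Wt f u (c u) * (if c u = p0 then 1 else 0) else Wt f u (c u))
        (Finset.mem_univ a), if_pos rfl]
      congr 1
      refine Finset.prod_congr rfl fun u hu => ?_
      rw [if_neg (Finset.ne_of_mem_erase hu)]
    rw [h1, ← Finset.mul_prod_erase Finset.univ (fun u => Wt f u (c u)) (Finset.mem_univ a)]
    ring
  rw [Finset.sum_congr rfl (fun c _ => key c)]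
  have swap := Fintype.prod_sum (fun (u : V) (p : V × V) =>
    (if u = a then Wt f u p * (if p = p0 then 1 else 0) else Wt f u p))
  rw [← swap]
  rw [Finset.prod_eq_single a
    (fun b _ hb => by simp only [if_neg hb]; exact Wt_sum f b)
    (fun hna => absurd (Finset.mem_univ a) hna)]
  simp only [if_pos rfl, mul_ite, mul_one, mul_zero, eq_self_iff_true, if_true]
  rw [Finset.sum_ite_eq' Finset.univ p0 (fun j => Wt f a j)]
  simp

/-! ### Paths and distances -/

def hasPath (f : V → V → Bool) (u v : V) (k : ℕ) : Prop :=
  ∃ x : ℕ → V, x 0 = u ∧ x k = v ∧ ∀ i < k, f (x i) (x (i+1)) = true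

lemma hasPath_zero {f : V → V → Bool} {u v : V} : hasPath f u v 0 ↔ u = v := by
  constructor
  · rintro ⟨x, h0, hk, -⟩; rw [← h0, hk]
  · rintro rfl; exact ⟨fun _ => u, rfl, rfl, by omega⟩

lemma hasPath_tail {f : V → V → Bool} {u b v : V} {k : ℕ}
    (h : hasPath f u b k) (e : f b v = true) : hasPath f u v (k+1) := by
  obtain ⟨x, h0, hk, he⟩ := h
  refine ⟨fun i => if i ≤ k then x i else v, by simp [h0], by simp, ?_⟩
  intro i hi
  rcases Nat.lt_or_ge i k with h' | h'
  · simpa [Nat.le_of_lt h', Nat.succ_le_of_lt h'] using he i h'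
  · have : i = k := by omega
    subst this
    simpa [hk] using e

lemma hasPath_cons {f : V → V → Bool} {u b v : V} {k : ℕ}
    (e : f u b = true) (h : hasPath f b v k) : hasPath f u v (k+1) := by
  obtain ⟨x, h0, hk, he⟩ := h
  refine ⟨fun i => if i = 0 then u else x (i - 1), by simp, by simp [hk], ?_⟩
  intro i hi
  rcases Nat.eq_zero_or_pos i with rfl | h'
  · simpa [h0] using e
  · have h1 : ¬ (i = 0) := by omega
    have h2 : ¬ (i + 1 = 0) := by omega
    simp only [h1, h2, if_false]
    have : i - 1 + 1 = i ∧ i + 1 - 1 = i := by omega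
    rw [show i + 1 - 1 = i from this.2]
    have := he (i-1) (by omega)
    rwa [show i - 1 + 1 = i by omega] at this

lemma reaches_iff_hasPath {f : V → V → Bool} {u v : V} :
    reaches f u v ↔ ∃ k, hasPath f u v k := by
  constructor
  · intro h
    induction h with
    | refl => exact ⟨0, hasPath_zero.2 rfl⟩
    | tail _ e ih => obtain ⟨k, hk⟩ := ih; exact ⟨k+1, hasPath_tail hk e⟩
  · rintro ⟨k, hk⟩
    induction k generalizing v with
    | zero =>
      rw [← hasPath_zero.1 hk]
      exact Relation.ReflTransGen.refl
    | succ k ih =>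
      obtain ⟨x, h0, hk', he⟩ := hk
      have hreach : reaches f u (x k) := ih ⟨x, h0, rfl, fun i hi => he i (by omega)⟩
      exact hreach.tail (by rw [← hk']; exact he k (by omega))

def dgDist (f : V → V → Bool) (u v : V) : ℕ :=
  if h : ∃ k, hasPath f u v k then Nat.find h else 0

lemma hasPath_dgDist {f : V → V → Bool} {u v : V} (h : reaches f u v) :
    hasPath f u v (dgDist f u v) := by
  have h' := reaches_iff_hasPath.1 h
  rw [dgDist, dif_pos h']
  exact Nat.find_spec h'

lemma dgDist_le {f : V → V → Bool} {u v : V} {k : ℕ} (h : hasPath f u v k) :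
    dgDist f u v ≤ k := by
  rw [dgDist, dif_pos ⟨k, h⟩]
  exact Nat.find_le h

lemma one_le_dgDist {f : V → V → Bool} {u v : V} (hr : reaches f u v) (hne : u ≠ v) :
    1 ≤ dgDist f u v := by
  by_contra h
  have h0 : dgDist f u v = 0 := by omega
  have := hasPath_dgDist hr
  rw [h0] at this
  exact hne (hasPath_zero.1 this)

lemma dgDist_mono {f g : V → V → Bool} {u v : V}
    (hle : ∀ a b, f a b = true → g a b = true) (hr : reaches f u v) :
    dgDist g u v ≤ dgDist f u v := by
  obtain ⟨x, h0, hk, he⟩ := hasPath_dgDist hr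
  exact dgDist_le ⟨x, h0, hk, fun i hi => hle _ _ (he i hi)⟩

lemma hasPath_splice {f : V → V → Bool} {u v : V} {k : ℕ} (x : ℕ → V)
    (hx0 : x 0 = u) (hxk : x k = v) (hxe : ∀ i < k, f (x i) (x (i+1)) = true)
    {i j : ℕ} (hij : i < j) (hjk : j ≤ k) (hxij : x i = x j) :
    hasPath f u v (k - (j - i)) := by
  refine ⟨fun m => if m < i then x m else x (m + (j - i)), ?_, ?_, ?_⟩
  · show (if 0 < i then x 0 else x (0 + (j - i))) = u
    split_ifs with h
    · exact hx0
    · rw [show 0 + (j - i) = j by omega, ← hxij, show i = 0 by omega]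
      exact hx0
  · show (if k - (j - i) < i then x (k - (j - i)) else x (k - (j - i) + (j - i))) = v
    rw [if_neg (by omega), show k - (j - i) + (j - i) = k by omega, hxk]
  · intro m hm
    show f (if m < i then x m else x (m + (j - i)))
        (if m + 1 < i then x (m + 1) else x (m + 1 + (j - i))) = true
    by_cases h1 : m + 1 < i
    · rw [if_pos (by omega), if_pos h1]; exact hxe m (by omega)
    · by_cases h2 : m < i
      · rw [if_pos h2, if_neg h1, show m + 1 + (j - i) = j by omega, ← hxij,
          show i = m + 1 by omega]
        exact hxe m (by omega)
      · rw [if_neg h2, if_neg h1, show m + 1 + (j - i) = m + (j - i) + 1 by omega]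
        exact hxe (m + (j - i)) (by omega)

lemma dgDist_lt_card {f : V → V → Bool} {u v : V} (hr : reaches f u v) :
    dgDist f u v < Fintype.card V := by
  by_contra hcon
  push_neg at hcon
  obtain ⟨x, h0, hk, he⟩ := hasPath_dgDist hr
  set k := dgDist f u v with hkdef
  have hcard : Fintype.card V < Fintype.card (Fin (k+1)) := by
    simpa using Nat.lt_succ_of_le hcon
  obtain ⟨a, b, hab, heq⟩ :=
    Fintype.exists_ne_map_eq_of_card_lt (fun m : Fin (k+1) => x m) hcard
  rcases Nat.lt_or_ge (a : ℕ) (b : ℕ) with h' | h'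
  · have := dgDist_le (hasPath_splice x h0 hk he h' (by omega : (b:ℕ) ≤ k) heq)
    omega
  · have h'' : (b : ℕ) < (a : ℕ) := by
      rcases Nat.lt_or_ge (b : ℕ) (a : ℕ) with h'' | h''
      · exact h''
      · exact absurd (Fin.ext (by omega)) hab
    have := dgDist_le (hasPath_splice x h0 hk he h'' (by omega : (a:ℕ) ≤ k) heq.symm)
    omega

/-! ### Reachability lemmas -/

lemma reaches_mono {f g : V → V → Bool} (hle : ∀ a b, f a b = true → g a b = true)
    {u v : V} (h : reaches f u v) : reaches g u v :=
  Relation.ReflTransGen.mono (fun a b hab => hle a b hab) _ _ h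

lemma reaches_collapse {h f : V → V → Bool}
    (hE : ∀ a b, h a b = true → reaches f a b) {u v : V}
    (hr : reaches h u v) : reaches f u v := by
  induction hr with
  | refl => exact Relation.ReflTransGen.refl
  | tail _ e ih => exact ih.trans (hE _ _ e)

/-! ### dirNext lemmas -/

lemma le_dirNext (f : V → V → Bool) (c : V → V × V) {a b : V} (h : f a b = true) :
    dirNext f c a b = true := by
  simp [dirNext, h]

lemma dirNext_new (f : V → V → Bool) (c : V → V × V) {a b : V}
    (hne : a ≠ b) (h2 : (c a).2 = b) : dirNext f c a b = true := by
  simp [dirNext, hne, h2]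

lemma dirNext_reaches {f : V → V → Bool} {c : V → V × V}
    (hw : dirWeight f c ≠ 0) {a b : V} (h : dirNext f c a b = true) :
    reaches f a b := by
  have hfac : Wt f a (c a) ≠ 0 := by
    rw [dirWeight_eq_prod] at hw
    exact fun h0 => hw (Finset.prod_eq_zero (Finset.mem_univ a) h0)
  rw [dirNext] at h
  simp only [Bool.or_eq_true, Bool.and_eq_true, decide_eq_true_eq] at h
  rcases h with h | ⟨hne, h2⟩
  · exact Relation.ReflTransGen.single h
  · rw [Wt] at hfac
    by_cases h0 : outDeg f a = 0
    · rw [if_pos h0] at hfac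
      have hca : c a = (a, a) := by
        by_contra hc; rw [if_neg hc] at hfac; exact hfac rfl
      rw [hca] at h2
      exact absurd (show a = b from h2) hne
    · rw [if_neg h0] at hfac
      have h1 : (c a).1 ∈ outN f a := by
        by_contra hc; rw [if_neg hc] at hfac; exact hfac rfl
      rw [if_pos h1] at hfac
      by_cases h0' : outDeg f (c a).1 = 0
      · rw [if_pos h0'] at hfac
        have h2a : (c a).2 = a := by
          by_contra hc; rw [if_neg hc] at hfac; exact hfac rfl
        rw [h2a] at h2
        exact absurd h2 hne
      · rw [if_neg h0'] at hfac
        have h2' : (c a).2 ∈ outN f (c a).1 := by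
          by_contra hc; rw [if_neg hc] at hfac; exact hfac rfl
        have e1 : f a (c a).1 = true := by
          simpa [outN] using h1
        have e2 : f (c a).1 (c a).2 = true := by
          simpa [outN] using h2'
        rw [← h2]
        have r1 : reaches f a (c a).1 := Relation.ReflTransGen.single e1
        exact r1.tail e2

/-! ### Potential -/

def rho (f : V → V → Bool) (u v : V) : ℝ :=
  if u ≠ v ∧ reaches f u v then (dgDist f u v : ℝ) - 1 else 0

def psi (f : V → V → Bool) : ℝ := ∑ u : V, ∑ v : V, rho f u v

lemma rho_nonneg (f : V → V → Bool) (u v : V) : 0 ≤ rho f u v := by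
  unfold rho
  split_ifs with h
  · have := one_le_dgDist h.2 h.1
    have : (1 : ℝ) ≤ (dgDist f u v : ℝ) := by exact_mod_cast this
    linarith
  · exact le_refl 0

lemma psi_nonneg (f : V → V → Bool) : 0 ≤ psi f :=
  Finset.sum_nonneg fun u _ => Finset.sum_nonneg fun v _ => rho_nonneg f u v

lemma rho_le_card (f : V → V → Bool) (u v : V) : rho f u v ≤ (Fintype.card V : ℝ) := by
  unfold rho
  split_ifs with h
  · have := dgDist_lt_card h.2
    have : (dgDist f u v : ℝ) ≤ (Fintype.card V : ℝ) := by exact_mod_cast this.le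
    linarith
  · positivity

lemma psi_le (f : V → V → Bool) : psi f ≤ (Fintype.card V : ℝ)^3 := by
  have h1 : psi f ≤ ∑ _u : V, ∑ _v : V, (Fintype.card V : ℝ) :=
    Finset.sum_le_sum fun u _ => Finset.sum_le_sum fun v _ => rho_le_card f u v
  have h2 : ∑ _u : V, ∑ _v : V, (Fintype.card V : ℝ)
      = (Fintype.card V : ℝ) * ((Fintype.card V : ℝ) * (Fintype.card V : ℝ)) := by
    simp [Finset.sum_const, Finset.card_univ, nsmul_eq_mul]
    try ring
  have h3 : (Fintype.card V : ℝ) * ((Fintype.card V : ℝ) * (Fintype.card V : ℝ))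
      = (Fintype.card V : ℝ)^3 := by ring
  linarith

lemma psi_ge_one {f0 g : V → V → Bool}
    (hsub : ∀ a b, f0 a b = true → g a b = true)
    (hnt : ¬ terminated f0 g) : 1 ≤ psi g := by
  rw [terminated] at hnt
  push_neg at hnt
  obtain ⟨u, v, hne, hr0, hgf⟩ := hnt
  have hrg : reaches g u v := reaches_mono hsub hr0
  have hd2 : 2 ≤ dgDist g u v := by
    rcases Nat.lt_or_ge (dgDist g u v) 2 with h | h
    · have h1 := one_le_dgDist hrg hne
      have hd1 : dgDist g u v = 1 := by omega
      have hp := hasPath_dgDist hrg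
      rw [hd1] at hp
      obtain ⟨x, h0, h1', he⟩ := hp
      have he0 := he 0 (by omega)
      rw [h0, h1'] at he0
      exact absurd he0 hgf
    · exact h
  have hrho : (1:ℝ) ≤ rho g u v := by
    rw [rho, if_pos ⟨hne, hrg⟩]
    have : (2:ℝ) ≤ (dgDist g u v : ℝ) := by exact_mod_cast hd2
    linarith
  calc (1:ℝ) ≤ rho g u v := hrho
    _ ≤ ∑ v' : V, rho g u v' :=
      Finset.single_le_sum (fun v' _ => rho_nonneg g u v') (Finset.mem_univ v)
    _ ≤ psi g :=
      Finset.single_le_sum (fun u' _ => Finset.sum_nonneg fun v' _ => rho_nonneg g u' v')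
        (Finset.mem_univ u)

/-! ### Even counting -/

lemma card_even_range (m : ℕ) : ((Finset.range m).filter (fun i => Even i)).card = (m+1)/2 := by
  induction m with
  | zero => simp
  | succ m ih =>
    rw [Finset.range_add_one, Finset.filter_insert]
    by_cases h : Even m
    · rw [if_pos h, Finset.card_insert_of_notMem (by simp)]
      rw [ih]
      rw [Nat.even_iff] at h
      omega
    · rw [if_neg h, ih]
      rw [Nat.even_iff] at h
      omega

/-! ### The per-pair one-step bound -/

lemma perPair (f : V → V → Bool) (u v : V) :
    ∑ c : V → V × V, dirWeight f c * rho (dirNext f c) u v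
      ≤ (1 - 1/(2 * (Fintype.card V : ℝ)^2)) * rho f u v := by
  have hN1 : (1:ℝ) ≤ (Fintype.card V : ℝ) := by
    have : 0 < Fintype.card V := Fintype.card_pos_iff.2 ⟨u⟩
    exact_mod_cast this
  set N : ℝ := (Fintype.card V : ℝ) with hNdef
  have hN0 : (0:ℝ) < N := by linarith
  by_cases hmain : u ≠ v ∧ reaches f u v
  case neg =>
    have hrf : rho f u v = 0 := by rw [rho, if_neg hmain]
    rw [hrf, mul_zero]
    have hzero : ∀ c : V → V × V, dirWeight f c * rho (dirNext f c) u v = 0 := by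
      intro c
      rcases eq_or_ne (dirWeight f c) 0 with h0 | h0
      · rw [h0, zero_mul]
      · have hr0 : rho (dirNext f c) u v = 0 := by
          rw [rho, if_neg]
          rintro ⟨hne, hr⟩
          exact hmain ⟨hne, reaches_collapse (fun a b hab => dirNext_reaches h0 hab) hr⟩
        rw [hr0, mul_zero]
    rw [Finset.sum_congr rfl fun c _ => hzero c]
    simp
  case pos =>
  obtain ⟨hne, hr⟩ := hmain
  have hrhof : rho f u v = (dgDist f u v : ℝ) - 1 := by rw [rho, if_pos ⟨hne, hr⟩]
  have hd1 : 1 ≤ dgDist f u v := one_le_dgDist hr hne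
  have hpath := hasPath_dgDist hr
  set d : ℕ := dgDist f u v with hd
  obtain ⟨x, hx0, hxd, hxe⟩ := hpath
  have hreachj : ∀ j, j ≤ d → reaches f (x j) v := by
    intro j hj
    rw [reaches_iff_hasPath]
    refine ⟨d - j, fun m => x (m + j), ?_, ?_, ?_⟩
    · show x (0 + j) = x j
      rw [Nat.zero_add]
    · show x (d - j + j) = v
      rw [show d - j + j = d by omega]; exact hxd
    · intro i hi
      show f (x (i + j)) (x (i + 1 + j)) = true
      have h := hxe (i + j) (by omega)
      rwa [show i + j + 1 = i + 1 + j by omega] at h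
  have hnotadj : ∀ i, i + 2 ≤ d → x i ≠ x (i + 2) := by
    intro i h2 heq
    have h := dgDist_le (hasPath_splice x hx0 hxd hxe (show i < i + 2 by omega) h2 heq)
    rw [← hd] at h
    omega
  set P : (V → V × V) → ℕ → Prop := fun c i => Even i ∧ c (x i) = (x (i+1), x (i+2)) with hP
  have key : ∀ c : V → V × V, ∀ m, ∀ j, j ≤ d → d - j ≤ m →
      dgDist (dirNext f c) (x j) v
        + ((Finset.Ico j (d-1)).filter (P c)).card + j ≤ d := by
    intro c m
    induction m with
    | zero =>
      intro j hj hm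
      have hjd : j = d := by omega
      subst hjd
      rw [Finset.Ico_eq_empty (by omega), Finset.filter_empty, Finset.card_empty]
      have hz : dgDist (dirNext f c) (x d) v ≤ 0 :=
        dgDist_le (hasPath_zero.2 hxd)
      omega
    | succ m ih =>
      intro j hj hm
      by_cases hjd : j = d
      · subst hjd
        rw [Finset.Ico_eq_empty (by omega), Finset.filter_empty, Finset.card_empty]
        have hz : dgDist (dirNext f c) (x d) v ≤ 0 :=
          dgDist_le (hasPath_zero.2 hxd)
        omega
      · have hjlt : j < d := by omega
        by_cases hs : j + 2 ≤ d ∧ P c j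
        · have hxne : x j ≠ x (j+2) := hnotadj j hs.1
          have hedge : dirNext f c (x j) (x (j+2)) = true := by
            apply dirNext_new f c hxne
            rw [hs.2.2]
          have hr2 : reaches (dirNext f c) (x (j+2)) v :=
            reaches_mono (fun a b hab => le_dirNext f c hab) (hreachj (j+2) hs.1)
          have hdist : dgDist (dirNext f c) (x j) v ≤ dgDist (dirNext f c) (x (j+2)) v + 1 :=
            dgDist_le (hasPath_cons hedge (hasPath_dgDist hr2))
          have hcard : ((Finset.Ico j (d-1)).filter (P c)).card
              = ((Finset.Ico (j+2) (d-1)).filter (P c)).card + 1 := by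
            have hset : (Finset.Ico j (d-1)).filter (P c)
                = insert j ((Finset.Ico (j+2) (d-1)).filter (P c)) := by
              ext i
              simp only [Finset.mem_filter, Finset.mem_Ico, Finset.mem_insert]
              constructor
              · rintro ⟨⟨hi1, hi2⟩, hPi⟩
                rcases eq_or_lt_of_le hi1 with h | h
                · exact Or.inl h.symm
                · refine Or.inr ⟨⟨?_, hi2⟩, hPi⟩
                  rcases Nat.lt_or_ge i (j+2) with h' | h'
                  · exfalso
                    have hij1 : i = j + 1 := by omega
                    have hev1 : Even (j + 1) := hij1 ▸ hPi.1
                    exact (Nat.even_add_one.mp hev1) hs.2.1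
                  · exact h'
              · rintro (rfl | ⟨⟨hi1, hi2⟩, hPi⟩)
                · exact ⟨⟨le_refl _, by omega⟩, hs.2⟩
                · exact ⟨⟨by omega, hi2⟩, hPi⟩
            rw [hset, Finset.card_insert_of_notMem (by
              simp only [Finset.mem_filter, Finset.mem_Ico]
              rintro ⟨⟨h1, -⟩, -⟩
              omega)]
          have hih := ih (j+2) hs.1 (by omega)
          omega
        · have hedge : dirNext f c (x j) (x (j+1)) = true :=
            le_dirNext f c (hxe j hjlt)
          have hr1 : reaches (dirNext f c) (x (j+1)) v :=
            reaches_mono (fun a b hab => le_dirNext f c hab) (hreachj (j+1) (by omega))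
          have hdist : dgDist (dirNext f c) (x j) v ≤ dgDist (dirNext f c) (x (j+1)) v + 1 :=
            dgDist_le (hasPath_cons hedge (hasPath_dgDist hr1))
          have hcard : (Finset.Ico j (d-1)).filter (P c)
              = (Finset.Ico (j+1) (d-1)).filter (P c) := by
            ext i
            simp only [Finset.mem_filter, Finset.mem_Ico]
            constructor
            · rintro ⟨⟨hi1, hi2⟩, hPi⟩
              refine ⟨⟨?_, hi2⟩, hPi⟩
              rcases eq_or_lt_of_le hi1 with h | h
              · exact absurd ⟨by omega, by rw [h]; exact hPi⟩ hs
              · omega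
            · rintro ⟨⟨hi1, hi2⟩, hPi⟩
              exact ⟨⟨by omega, hi2⟩, hPi⟩
          have hih := ih (j+1) (by omega) (by omega)
          rw [hcard]
          omega
  have hpoint : ∀ c : V → V × V,
      rho (dirNext f c) u v ≤ ((d:ℝ) - 1)
        - ∑ i ∈ Finset.range (d-1), (if P c i then (1:ℝ) else 0) := by
    intro c
    have hkey := key c d 0 (by omega) (by omega)
    rw [hx0] at hkey
    rw [Finset.range_eq_Ico]
    have hr' : reaches (dirNext f c) u v :=
      reaches_mono (fun a b hab => le_dirNext f c hab) hr
    have hrho' : rho (dirNext f c) u v = (dgDist (dirNext f c) u v : ℝ) - 1 := by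
      rw [rho, if_pos ⟨hne, hr'⟩]
    have hsum : ∑ i ∈ Finset.Ico 0 (d-1), (if P c i then (1:ℝ) else 0)
        = (((Finset.Ico 0 (d-1)).filter (P c)).card : ℝ) := by
      rw [Finset.sum_boole]
    rw [hrho', hsum]
    have hcast : (dgDist (dirNext f c) u v : ℝ)
        + (((Finset.Ico 0 (d-1)).filter (P c)).card : ℝ) ≤ (d:ℝ) := by
      exact_mod_cast (by omega :
        dgDist (dirNext f c) u v + ((Finset.Ico 0 (d-1)).filter (P c)).card ≤ d)
    linarith
  have hWlb : ∀ i, i < d - 1 → Even i → 1/(N^2) ≤ Wt f (x i) (x (i+1), x (i+2)) := by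
    intro i hi _hev
    have e1 : f (x i) (x (i+1)) = true := hxe i (by omega)
    have e2 : f (x (i+1)) (x (i+2)) = true := hxe (i+1) (by omega)
    have mem1 : x (i+1) ∈ outN f (x i) := by simp [outN, e1]
    have mem2 : x (i+2) ∈ outN f (x (i+1)) := by simp [outN, e2]
    have hdeg1 : outDeg f (x i) ≠ 0 := by
      rw [outDeg]; exact Finset.card_ne_zero_of_mem mem1
    have hdeg2 : outDeg f (x (i+1)) ≠ 0 := by
      rw [outDeg]; exact Finset.card_ne_zero_of_mem mem2
    have hval : Wt f (x i) (x (i+1), x (i+2))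
        = 1 / ((outDeg f (x i) : ℝ) * (outDeg f (x (i+1)) : ℝ)) := by
      simp [Wt, hdeg1, hdeg2, mem1, mem2]
    rw [hval]
    have hle1 : (outDeg f (x i) : ℝ) ≤ N := by
      rw [hNdef]
      exact_mod_cast le_trans (Finset.card_le_univ (outN f (x i))) (le_of_eq Finset.card_univ)
    have hle2 : (outDeg f (x (i+1)) : ℝ) ≤ N := by
      rw [hNdef]
      exact_mod_cast le_trans (Finset.card_le_univ (outN f (x (i+1)))) (le_of_eq Finset.card_univ)
    have hp1 : (0:ℝ) < (outDeg f (x i) : ℝ) := by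
      exact_mod_cast Nat.pos_of_ne_zero hdeg1
    have hp2 : (0:ℝ) < (outDeg f (x (i+1)) : ℝ) := by
      exact_mod_cast Nat.pos_of_ne_zero hdeg2
    have hprod : (outDeg f (x i) : ℝ) * (outDeg f (x (i+1)) : ℝ) ≤ N^2 := by
      nlinarith
    calc 1/(N^2) ≤ 1/((outDeg f (x i) : ℝ) * (outDeg f (x (i+1)) : ℝ)) :=
          one_div_le_one_div_of_le (by positivity) hprod
      _ = _ := rfl
  have hmarg : ∑ c : V → V × V, dirWeight f c
        * ∑ i ∈ Finset.range (d-1), (if P c i then (1:ℝ) else 0)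
      = ∑ i ∈ Finset.range (d-1),
          (if Even i then Wt f (x i) (x (i+1), x (i+2)) else 0) := by
    calc ∑ c : V → V × V, dirWeight f c
            * ∑ i ∈ Finset.range (d-1), (if P c i then (1:ℝ) else 0)
        = ∑ c : V → V × V, ∑ i ∈ Finset.range (d-1),
            dirWeight f c * (if P c i then (1:ℝ) else 0) :=
          Finset.sum_congr rfl fun c _ => Finset.mul_sum _ _ _
      _ = ∑ i ∈ Finset.range (d-1), ∑ c : V → V × V,
            dirWeight f c * (if P c i then (1:ℝ) else 0) := Finset.sum_comm
      _ = ∑ i ∈ Finset.range (d-1),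
            (if Even i then Wt f (x i) (x (i+1), x (i+2)) else 0) := by
          refine Finset.sum_congr rfl fun i _ => ?_
          by_cases hev : Even i
          · have hiff : ∀ c : V → V × V, (if P c i then (1:ℝ) else 0)
                = (if c (x i) = (x (i+1), x (i+2)) then (1:ℝ) else 0) := by
              intro c
              simp only [hP]
              simp [hev]
            rw [Finset.sum_congr rfl fun c _ => by rw [hiff c]]
            rw [marginal f (x i) (x (i+1), x (i+2)), if_pos hev]
          · have hiff : ∀ c : V → V × V, (if P c i then (1:ℝ) else 0) = 0 := by
              intro c
              simp only [hP]
              simp [hev]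
            rw [Finset.sum_congr rfl fun c _ => by
              rw [hiff c, mul_zero], if_neg hev]
            simp
  have hcount : ((d:ℝ) - 1) / 2 * (1/(N^2))
      ≤ ∑ i ∈ Finset.range (d-1), (if Even i then Wt f (x i) (x (i+1), x (i+2)) else 0) := by
    have hlb : ∑ i ∈ Finset.range (d-1), (if Even i then (1/(N^2) : ℝ) else 0)
        ≤ ∑ i ∈ Finset.range (d-1), (if Even i then Wt f (x i) (x (i+1), x (i+2)) else 0) := by
      refine Finset.sum_le_sum fun i hi => ?_
      by_cases hev : Even i
      · rw [if_pos hev, if_pos hev]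
        exact hWlb i (Finset.mem_range.1 hi) hev
      · rw [if_neg hev, if_neg hev]
    have hsum2 : ∑ i ∈ Finset.range (d-1), (if Even i then (1/(N^2) : ℝ) else 0)
        = (((Finset.range (d-1)).filter (fun i => Even i)).card : ℝ) * (1/(N^2)) := by
      rw [← Finset.sum_filter, Finset.sum_const, nsmul_eq_mul]
    have hcardeq := card_even_range (d-1)
    have hnat : d ≤ 2 * ((d-1+1)/2) + 1 := by omega
    have hcast : (d:ℝ) ≤ 2 * (((d-1+1)/2 : ℕ) : ℝ) + 1 := by exact_mod_cast hnat
    have h2 : ((d:ℝ) - 1) ≤ 2 * (((Finset.range (d-1)).filter (fun i => Even i)).card : ℝ) := by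
      rw [hcardeq]
      push_cast at hcast ⊢
      linarith
    have hpos : (0:ℝ) ≤ 1/(N^2) := by positivity
    calc ((d:ℝ) - 1) / 2 * (1/(N^2))
        ≤ (((Finset.range (d-1)).filter (fun i => Even i)).card : ℝ) * (1/(N^2)) := by
          apply mul_le_mul_of_nonneg_right _ hpos
          linarith
      _ = ∑ i ∈ Finset.range (d-1), (if Even i then (1/(N^2) : ℝ) else 0) := hsum2.symm
      _ ≤ _ := hlb
  have hexpand : ∑ c : V → V × V, dirWeight f c
        * (((d:ℝ)-1) - ∑ i ∈ Finset.range (d-1), (if P c i then (1:ℝ) else 0))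
      = ((d:ℝ)-1) - ∑ i ∈ Finset.range (d-1),
          (if Even i then Wt f (x i) (x (i+1), x (i+2)) else 0) := by
    rw [← hmarg]
    rw [Finset.sum_congr rfl (fun c _ => mul_sub (dirWeight f c) _ _)]
    rw [Finset.sum_sub_distrib]
    congr 1
    rw [← Finset.sum_mul, sum_dirWeight, one_mul]
  have hfinal : (1 - 1/(2*N^2)) * ((d:ℝ)-1)
      = ((d:ℝ)-1) - ((d:ℝ)-1)/2 * (1/N^2) := by
    field_simp
  rw [hrhof]
  calc ∑ c : V → V × V, dirWeight f c * rho (dirNext f c) u v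
      ≤ ∑ c : V → V × V, dirWeight f c
          * (((d:ℝ)-1) - ∑ i ∈ Finset.range (d-1), (if P c i then (1:ℝ) else 0)) :=
        Finset.sum_le_sum fun c _ =>
          mul_le_mul_of_nonneg_left (hpoint c) (dirWeight_nonneg f c)
    _ = ((d:ℝ)-1) - ∑ i ∈ Finset.range (d-1),
          (if Even i then Wt f (x i) (x (i+1), x (i+2)) else 0) := hexpand
    _ ≤ ((d:ℝ)-1) - ((d:ℝ)-1)/2 * (1/N^2) := by linarith
    _ = (1 - 1/(2*N^2)) * ((d:ℝ)-1) := hfinal.symm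

lemma oneStep (f : V → V → Bool) :
    ∑ c : V → V × V, dirWeight f c * psi (dirNext f c)
      ≤ (1 - 1/(2 * (Fintype.card V : ℝ)^2)) * psi f := by
  simp only [psi, Finset.mul_sum]
  have swap : ∑ c : V → V × V, ∑ u : V, ∑ v : V,
        dirWeight f c * rho (dirNext f c) u v
      = ∑ u : V, ∑ v : V, ∑ c : V → V × V,
        dirWeight f c * rho (dirNext f c) u v := by
    rw [Finset.sum_comm]
    exact Finset.sum_congr rfl fun u _ => Finset.sum_comm
  rw [swap]
  refine Finset.sum_le_sum fun u _ => Finset.sum_le_sum fun v _ => perPair f u v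

/-! ### dirStep lemmas -/

lemma dirStep_nonneg (f g : V → V → Bool) : 0 ≤ dirStep f g := by
  refine Finset.sum_nonneg fun c _ => ?_
  split_ifs
  · exact dirWeight_nonneg f c
  · exact le_refl 0

lemma dirStep_rowsum (f : V → V → Bool) : ∑ g : V → V → Bool, dirStep f g = 1 := by
  rw [← sum_dirWeight f]
  simp only [dirStep]
  rw [Finset.sum_comm]
  refine Finset.sum_congr rfl fun c _ => ?_
  rw [Finset.sum_ite_eq Finset.univ (dirNext f c) (fun _ => dirWeight f c)]
  simp

lemma dirStep_psi (h : V → V → Bool) :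
    ∑ g : V → V → Bool, dirStep h g * psi g
      = ∑ c : V → V × V, dirWeight h c * psi (dirNext h c) := by
  simp only [dirStep, Finset.sum_mul, ite_mul, zero_mul]
  rw [Finset.sum_comm]
  refine Finset.sum_congr rfl fun c _ => ?_
  rw [Finset.sum_ite_eq Finset.univ (dirNext h c) (fun g => dirWeight h c * psi g)]
  simp

end Aux

/-! ### Markov chain lemmas (general state space) -/

section Chain
variable {Γ : Type} [Fintype Γ]

lemma distAt_nonneg (step : Γ → Γ → ℝ) (hs : ∀ a b, 0 ≤ step a b) (g0 : Γ) :
    ∀ t g, 0 ≤ distAt step g0 t g := by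
  intro t
  induction t with
  | zero => intro g; simp only [distAt]; split_ifs <;> norm_num
  | succ t ih => intro g; exact Finset.sum_nonneg fun h _ => mul_nonneg (ih h) (hs h g)

lemma sum_distAt (step : Γ → Γ → ℝ) (hrow : ∀ a, ∑ b, step a b = 1) (g0 : Γ) :
    ∀ t, ∑ g, distAt step g0 t g = 1 := by
  intro t
  induction t with
  | zero => simp [distAt]
  | succ t ih =>
    simp only [distAt]
    rw [Finset.sum_comm]
    simp only [← Finset.mul_sum, hrow]
    simpa using ih

lemma distAt_succ_front (step : Γ → Γ → ℝ) (g0 : Γ) (t : ℕ) (g : Γ) :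
    distAt step g0 (t+1) g = ∑ h, step g0 h * distAt step h t g := by
  induction t generalizing g with
  | zero =>
    simp only [distAt, ite_mul, one_mul, zero_mul, mul_ite, mul_one, mul_zero]
    rw [Finset.sum_ite_eq' Finset.univ g0 (fun h => step h g),
        Finset.sum_ite_eq Finset.univ g (fun h => step g0 h)]
    simp
  | succ t ih =>
    show ∑ h : Γ, distAt step g0 (t+1) h * step h g = _
    calc ∑ h : Γ, distAt step g0 (t+1) h * step h g
        = ∑ h : Γ, (∑ h' : Γ, step g0 h' * distAt step h' t h) * step h g := by
          refine Finset.sum_congr rfl fun h _ => ?_; rw [ih]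
      _ = ∑ h : Γ, ∑ h' : Γ, (step g0 h' * distAt step h' t h) * step h g :=
          Finset.sum_congr rfl fun h _ => Finset.sum_mul _ _ _
      _ = ∑ h' : Γ, ∑ h : Γ, (step g0 h' * distAt step h' t h) * step h g :=
          Finset.sum_comm
      _ = ∑ h' : Γ, step g0 h' * ∑ h : Γ, distAt step h' t h * step h g := by
          refine Finset.sum_congr rfl fun h' _ => ?_
          rw [Finset.mul_sum]
          exact Finset.sum_congr rfl fun h _ => by ring
      _ = ∑ h' : Γ, step g0 h' * distAt step h' (t+1) g := rfl

lemma traj_aux (step : Γ → Γ → ℝ) (Q : Γ → Prop) :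
    ∀ (T : ℕ) (g0 : Γ), (∑ s : Fin (T+1) → Γ,
        if s 0 = g0 ∧ Q (s (Fin.last T)) then ∏ t : Fin T, step (s t.castSucc) (s t.succ) else 0)
      = ∑ g, if Q g then distAt step g0 T g else 0 := by
  intro T
  induction T with
  | zero =>
    intro g0
    have he : ∀ s : Fin 1 → Γ,
        (if s 0 = g0 ∧ Q (s (Fin.last 0)) then ∏ t : Fin 0, step (s t.castSucc) (s t.succ) else 0)
        = if s 0 = g0 ∧ Q (s 0) then (1:ℝ) else 0 := by
      intro s
      have h0 : (Fin.last 0) = (0 : Fin 1) := rfl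
      rw [h0]
      simp
    rw [Finset.sum_congr rfl fun s _ => he s]
    rw [← (Equiv.funUnique (Fin 1) Γ).symm.sum_comp
      (fun s : Fin 1 → Γ => if s 0 = g0 ∧ Q (s 0) then (1:ℝ) else 0)]
    refine Finset.sum_congr rfl fun g _ => ?_
    show (if g = g0 ∧ Q g then (1:ℝ) else 0) = if Q g then distAt step g0 0 g else 0
    simp only [distAt]
    by_cases h1 : g = g0 <;> by_cases h2 : Q g <;> simp [h1, h2]
  | succ T ih =>
    intro g0
    rw [← (Fin.consEquiv (fun _ : Fin (T+2) => Γ)).sum_comp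
      (fun s : Fin (T+2) → Γ =>
        if s 0 = g0 ∧ Q (s (Fin.last (T+1))) then
          ∏ t : Fin (T+1), step (s t.castSucc) (s t.succ) else 0)]
    rw [Fintype.sum_prod_type]
    simp only [Fin.consEquiv_apply]
    have hF : ∀ (g : Γ) (s' : Fin (T+1) → Γ),
        (if (Fin.cons g s' : Fin (T+2) → Γ) 0 = g0
            ∧ Q ((Fin.cons g s' : Fin (T+2) → Γ) (Fin.last (T+1))) then
          ∏ t : Fin (T+1), step ((Fin.cons g s' : Fin (T+2) → Γ) t.castSucc)
            ((Fin.cons g s' : Fin (T+2) → Γ) t.succ) else 0)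
        = (if g = g0 then (if s' 0 = s' 0 ∧ Q (s' (Fin.last T)) then
            step g (s' 0) * ∏ t : Fin T, step (s' t.castSucc) (s' t.succ) else 0) else 0) := by
      intro g s'
      have hcons0 : (Fin.cons g s' : Fin (T+2) → Γ) 0 = g := Fin.cons_zero _ _
      have hlast : (Fin.cons g s' : Fin (T+2) → Γ) (Fin.last (T+1)) = s' (Fin.last T) := by
        rw [← Fin.succ_last, Fin.cons_succ]
      have hprod : ∏ t : Fin (T+1), step ((Fin.cons g s' : Fin (T+2) → Γ) t.castSucc)
            ((Fin.cons g s' : Fin (T+2) → Γ) t.succ)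
          = step g (s' 0) * ∏ t : Fin T, step (s' t.castSucc) (s' t.succ) := by
        rw [Fin.prod_univ_succ]
        have hhead : step ((Fin.cons g s' : Fin (T+2) → Γ) ((0 : Fin (T+1)).castSucc))
            ((Fin.cons g s' : Fin (T+2) → Γ) ((0 : Fin (T+1)).succ)) = step g (s' 0) := rfl
        have hrest : ∀ t : Fin T, step ((Fin.cons g s' : Fin (T+2) → Γ) (t.succ).castSucc)
              ((Fin.cons g s' : Fin (T+2) → Γ) (t.succ).succ)
            = step (s' t.castSucc) (s' t.succ) := fun t => by
          rw [← Fin.succ_castSucc, Fin.cons_succ, Fin.cons_succ]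
        rw [hhead, Finset.prod_congr rfl fun t _ => hrest t]
      rw [hcons0, hlast, hprod]
      by_cases h1 : g = g0 <;> by_cases h2 : Q (s' (Fin.last T)) <;> simp [h1, h2]
    rw [Finset.sum_congr rfl fun g _ => Finset.sum_congr rfl fun s' _ => hF g s']
    have hcollapse : ∀ g : Γ, (∑ s' : Fin (T+1) → Γ,
        (if g = g0 then (if s' 0 = s' 0 ∧ Q (s' (Fin.last T)) then
            step g (s' 0) * ∏ t : Fin T, step (s' t.castSucc) (s' t.succ) else 0) else 0))
        = (if g = g0 then (∑ s' : Fin (T+1) → Γ, (if s' 0 = s' 0 ∧ Q (s' (Fin.last T)) then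
            step g (s' 0) * ∏ t : Fin T, step (s' t.castSucc) (s' t.succ) else 0)) else 0) := by
      intro g
      by_cases h1 : g = g0 <;> simp [h1]
    rw [Finset.sum_congr rfl fun g _ => hcollapse g]
    rw [Finset.sum_ite_eq' Finset.univ g0 (fun g => ∑ s' : Fin (T+1) → Γ,
      (if s' 0 = s' 0 ∧ Q (s' (Fin.last T)) then
        step g (s' 0) * ∏ t : Fin T, step (s' t.castSucc) (s' t.succ) else 0))]
    rw [if_pos (Finset.mem_univ g0)]
    have hpart : ∀ s' : Fin (T+1) → Γ,
        (if s' 0 = s' 0 ∧ Q (s' (Fin.last T)) then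
          step g0 (s' 0) * ∏ t : Fin T, step (s' t.castSucc) (s' t.succ) else 0)
        = ∑ h : Γ, step g0 h * (if s' 0 = h ∧ Q (s' (Fin.last T)) then
            ∏ t : Fin T, step (s' t.castSucc) (s' t.succ) else 0) := by
      intro s'
      have hterm : ∀ h : Γ, step g0 h * (if s' 0 = h ∧ Q (s' (Fin.last T)) then
            ∏ t : Fin T, step (s' t.castSucc) (s' t.succ) else 0)
          = (if s' 0 = h then (if Q (s' (Fin.last T)) then
              step g0 h * ∏ t : Fin T, step (s' t.castSucc) (s' t.succ) else 0) else 0) := by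
        intro h
        by_cases h1 : s' 0 = h <;> by_cases h2 : Q (s' (Fin.last T)) <;> simp [h1, h2]
      rw [Finset.sum_congr rfl fun h _ => hterm h]
      rw [Finset.sum_ite_eq Finset.univ (s' 0) (fun h => (if Q (s' (Fin.last T)) then
        step g0 h * ∏ t : Fin T, step (s' t.castSucc) (s' t.succ) else 0))]
      rw [if_pos (Finset.mem_univ (s' 0))]
      by_cases h2 : Q (s' (Fin.last T)) <;> simp [h2]
    rw [Finset.sum_congr rfl fun s' _ => hpart s']
    rw [Finset.sum_comm]
    have hinner : ∀ h : Γ, (∑ s' : Fin (T+1) → Γ, step g0 h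
          * (if s' 0 = h ∧ Q (s' (Fin.last T)) then
              ∏ t : Fin T, step (s' t.castSucc) (s' t.succ) else 0))
        = step g0 h * ∑ g, (if Q g then distAt step h T g else 0) := by
      intro h
      rw [← Finset.mul_sum, ih h]
    rw [Finset.sum_congr rfl fun h _ => hinner h]
    calc ∑ h : Γ, step g0 h * ∑ g, (if Q g then distAt step h T g else 0)
        = ∑ h : Γ, ∑ g, step g0 h * (if Q g then distAt step h T g else 0) :=
          Finset.sum_congr rfl fun h _ => Finset.mul_sum _ _ _
      _ = ∑ g, ∑ h : Γ, step g0 h * (if Q g then distAt step h T g else 0) :=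
          Finset.sum_comm
      _ = ∑ g, if Q g then distAt step g0 (T+1) g else 0 := by
          refine Finset.sum_congr rfl fun g _ => ?_
          by_cases hq : Q g
          · simp only [hq, if_true]
            exact (distAt_succ_front step g0 T g).symm
          · simp [hq]

lemma trajProb_eq (step : Γ → Γ → ℝ) (g0 : Γ) (T : ℕ) (Q : Γ → Prop) :
    trajProb step g0 T (fun g => Q (g T)) = ∑ g, if Q g then distAt step g0 T g else 0 := by
  rw [trajProb, ← traj_aux step Q T g0]
  refine Finset.sum_congr rfl fun s _ => ?_
  have hidx : (⟨min T T, Nat.lt_succ_of_le (Nat.min_le_right T T)⟩ : Fin (T+1)) = Fin.last T :=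
    Fin.ext (Nat.min_self T)
  show (if s 0 = g0 ∧ Q (s ⟨min T T, Nat.lt_succ_of_le (Nat.min_le_right T T)⟩)
      then ∏ t : Fin T, step (s t.castSucc) (s t.succ) else 0) = _
  rw [hidx]

end Chain


/-- There is a constant `C > 0` such that for every `n ≥ 2` and every
simple directed graph `G₀` (no self-loops) on `n` vertices, after `T = ⌈C·n²·ln n⌉`
rounds of the directed two-hop process, with probability at least `1 − 1/n` the process
has terminated: for every ordered pair of distinct vertices `(u, v)` such that `G₀`
contains a directed path from `u` to `v`, the directed edge `(u, v)` belongs to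
`G_T`. -/
theorem directed_twoHop_upper_bound :
    ∃ C : ℝ, 0 < C ∧
      ∀ (V : Type) [Fintype V] [DecidableEq V] (n : ℕ), 2 ≤ n → Fintype.card V = n →
        ∀ f0 : V → V → Bool, (∀ v, f0 v v = false) →
          ∀ T : ℕ, T = ⌈C * n ^ 2 * Real.log n⌉₊ →
            1 - 1 / (n : ℝ) ≤
              trajProb dirStep f0 T (fun g => terminated f0 (g T)) := by
  refine ⟨8, by norm_num, ?_⟩
  intro V _ _ n hn hcard f0 _hf0 T hT
  classical
  have hn1 : (1:ℝ) ≤ (n:ℝ) := by exact_mod_cast Nat.one_le_of_lt hn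
  have hnpos : (0:ℝ) < (n:ℝ) := by linarith
  have hcV : (Fintype.card V : ℝ) = (n : ℝ) := by exact_mod_cast hcard
  set ε : ℝ := 1/(2 * (n:ℝ)^2) with hε
  have hε_pos : 0 < ε := by positivity
  have hε_le : ε ≤ 1/2 := by
    rw [hε]
    rw [div_le_div_iff₀ (by positivity) (by norm_num)]
    nlinarith
  have h1ε : 0 ≤ 1 - ε := by linarith
  have hone : ∀ f : V → V → Bool, ∑ g, dirStep f g * psi g ≤ (1-ε) * psi f := by
    intro f
    rw [dirStep_psi]
    have h := oneStep f
    rwa [hcV, ← hε] at h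
  have hexp : ∀ t, ∑ g, distAt dirStep f0 t g * psi g ≤ (1-ε)^t * psi f0 := by
    intro t
    induction t with
    | zero =>
      simp only [distAt, pow_zero, one_mul, ite_mul, zero_mul]
      rw [Finset.sum_ite_eq' Finset.univ f0 (fun g => psi g)]
      simp
    | succ t ih =>
      have hstep : ∑ g, distAt dirStep f0 (t+1) g * psi g
          = ∑ h, distAt dirStep f0 t h * ∑ g, dirStep h g * psi g := by
        show ∑ g, (∑ h, distAt dirStep f0 t h * dirStep h g) * psi g = _
        calc ∑ g, (∑ h, distAt dirStep f0 t h * dirStep h g) * psi g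
            = ∑ g, ∑ h, (distAt dirStep f0 t h * dirStep h g) * psi g :=
              Finset.sum_congr rfl fun g _ => Finset.sum_mul _ _ _
          _ = ∑ h, ∑ g, (distAt dirStep f0 t h * dirStep h g) * psi g :=
              Finset.sum_comm
          _ = ∑ h, distAt dirStep f0 t h * ∑ g, dirStep h g * psi g := by
              refine Finset.sum_congr rfl fun h _ => ?_
              rw [Finset.mul_sum]
              exact Finset.sum_congr rfl fun g _ => by ring
      rw [hstep]
      calc ∑ h, distAt dirStep f0 t h * ∑ g, dirStep h g * psi g
          ≤ ∑ h, distAt dirStep f0 t h * ((1-ε) * psi h) := by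
            refine Finset.sum_le_sum fun h _ => ?_
            exact mul_le_mul_of_nonneg_left (hone h)
              (distAt_nonneg dirStep dirStep_nonneg f0 t h)
        _ = (1-ε) * ∑ h, distAt dirStep f0 t h * psi h := by
            rw [Finset.mul_sum]; exact Finset.sum_congr rfl fun h _ => by ring
        _ ≤ (1-ε) * ((1-ε)^t * psi f0) := mul_le_mul_of_nonneg_left ih h1ε
        _ = (1-ε)^(t+1) * psi f0 := by ring
  have hsupp : ∀ t (g : V → V → Bool), distAt dirStep f0 t g ≠ 0 →
      (∀ a b, f0 a b = true → g a b = true) ∧ (∀ a b, g a b = true → reaches f0 a b) := by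
    intro t
    induction t with
    | zero =>
      intro g hg
      have hg0 : g = f0 := by
        by_contra hne
        simp only [distAt, if_neg hne] at hg
        exact hg rfl
      subst hg0
      exact ⟨fun a b h => h, fun a b h => Relation.ReflTransGen.single h⟩
    | succ t ih =>
      intro g hg
      simp only [distAt] at hg
      obtain ⟨h, -, hne⟩ := Finset.exists_ne_zero_of_sum_ne_zero hg
      have hd : distAt dirStep f0 t h ≠ 0 := fun h0 => hne (by rw [h0, zero_mul])
      have hs : dirStep h g ≠ 0 := fun h0 => hne (by rw [h0, mul_zero])
      obtain ⟨hsub, hreach⟩ := ih h hd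
      rw [dirStep] at hs
      obtain ⟨c, -, hcne⟩ := Finset.exists_ne_zero_of_sum_ne_zero hs
      have hcg : dirNext h c = g := by
        by_contra hne'
        rw [if_neg hne'] at hcne
        exact hcne rfl
      have hwne : dirWeight h c ≠ 0 := by rwa [if_pos hcg] at hcne
      subst hcg
      constructor
      · intro a b hab
        exact le_dirNext h c (hsub a b hab)
      · intro a b hab
        exact reaches_collapse hreach (dirNext_reaches hwne hab)
  have hbad : ∑ g, (if ¬ terminated f0 g then distAt dirStep f0 T g else 0)
      ≤ (1-ε)^T * psi f0 := by
    refine le_trans (Finset.sum_le_sum fun g _ => ?_) (hexp T)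
    by_cases hterm : terminated f0 g
    · rw [if_neg (by simpa using hterm)]
      exact mul_nonneg (distAt_nonneg dirStep dirStep_nonneg f0 T g) (psi_nonneg g)
    · rw [if_pos hterm]
      rcases eq_or_ne (distAt dirStep f0 T g) 0 with h0 | h0
      · rw [h0, zero_mul]
      · have hg := hsupp T g h0
        have h1 : 1 ≤ psi g := psi_ge_one hg.1 hterm
        calc distAt dirStep f0 T g = distAt dirStep f0 T g * 1 := (mul_one _).symm
          _ ≤ distAt dirStep f0 T g * psi g :=
            mul_le_mul_of_nonneg_left h1 (distAt_nonneg dirStep dirStep_nonneg f0 T g)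
  have htot : ∑ g, distAt dirStep f0 T g = 1 := sum_distAt _ dirStep_rowsum f0 T
  have := trajProb_eq dirStep f0 T (terminated f0)
  rw [this]
  have hsplit : ∑ g, (if terminated f0 g then distAt dirStep f0 T g else 0)
      = 1 - ∑ g, (if ¬ terminated f0 g then distAt dirStep f0 T g else 0) := by
    rw [← htot, ← Finset.sum_sub_distrib]
    refine Finset.sum_congr rfl fun g _ => ?_
    by_cases hterm : terminated f0 g
    · rw [if_pos hterm, if_neg (by simpa using hterm)]; ring
    · rw [if_neg hterm, if_pos hterm]; ring
  rw [hsplit]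
  have hTlb : (8:ℝ) * (n:ℝ)^2 * Real.log n ≤ (T : ℝ) := by
    rw [hT]
    exact Nat.le_ceil _
  have hlog : 0 ≤ Real.log n := Real.log_nonneg hn1
  have hεT : 4 * Real.log n ≤ ε * T := by
    rw [hε]
    rw [div_mul_eq_mul_div, one_mul, le_div_iff₀ (by positivity)]
    nlinarith
  have hpow : (1-ε)^T ≤ 1/(n:ℝ)^4 := by
    have h1 : (1-ε)^T ≤ Real.exp (-ε)^T :=
      pow_le_pow_left₀ h1ε (by linarith [Real.add_one_le_exp (-ε)]) T
    have h2 : Real.exp (-ε)^T = Real.exp ((T:ℝ) * (-ε)) := (Real.exp_nat_mul (-ε) T).symm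
    have h3 : Real.exp ((T:ℝ) * (-ε)) ≤ Real.exp (-(4 * Real.log n)) := by
      apply Real.exp_le_exp.2
      have : ε * T = (T:ℝ) * ε := mul_comm _ _
      nlinarith
    have h4 : Real.exp (-(4 * Real.log n)) = 1/(n:ℝ)^4 := by
      rw [Real.exp_neg]
      rw [show (4:ℝ) * Real.log n = ((4:ℕ):ℝ) * Real.log n by norm_num]
      rw [Real.exp_nat_mul, Real.exp_log hnpos]
      rw [one_div]
    calc (1-ε)^T ≤ Real.exp (-ε)^T := h1
      _ = Real.exp ((T:ℝ) * (-ε)) := h2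
      _ ≤ Real.exp (-(4 * Real.log n)) := h3
      _ = 1/(n:ℝ)^4 := h4
  have hpsi0 : psi f0 ≤ (n:ℝ)^3 := by
    have := psi_le f0
    rwa [hcV] at this
  have hnum : (1-ε)^T * psi f0 ≤ 1/(n:ℝ) := by
    have hb : (1-ε)^T * psi f0 ≤ (1/(n:ℝ)^4) * (n:ℝ)^3 := by
      apply mul_le_mul hpow hpsi0 (psi_nonneg f0) (by positivity)
    have : (1/(n:ℝ)^4) * (n:ℝ)^3 = 1/(n:ℝ) := by
      field_simp
    linarith
  linarith
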